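/- Let U be an Urysohn metric space such that 0 is a limit point of dist(U). Then dist(U) is a closed subset of ℝ. -/

import Mathlib

/-- The set of distances realized in a metric space. -/
def distSet (X : Type*) [MetricSpace X] : Set ℝ :=
  {r : ℝ | ∃ x y : X, dist x y = r}

/-- A metric space is homogeneous if every isometry from a finite subset into the
space extends to a bijective self-isometry. -/
def IsHomogeneous (X : Type*) [MetricSpace X] : Prop :=
  ∀ F : Set X, F.Finite →
    ∀ f : F → X, (∀ x y : F, dist (f x) (f y) = dist (x : X) (y : X)) →
      ∃ g : X ≃ᵢ X, ∀ x : F, g (x : X) = f x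

/-- A metric space is universal if it is homogeneous and embeds isometrically every
finite metric space whose distances lie in its distance set. -/
def IsUniversal (X : Type*) [MetricSpace X] : Prop :=
  IsHomogeneous X ∧
    ∀ (F : Type) [MetricSpace F] [Finite F], distSet F ⊆ distSet X →
      ∃ f : F → X, ∀ a b : F, dist (f a) (f b) = dist a b

/-- An Urysohn metric space: homogeneous, separable, complete, and embedding every
separable metric space whose distances lie in its distance set. -/
def IsUrysohn (X : Type*) [MetricSpace X] : Prop :=
  IsHomogeneous X ∧ TopologicalSpace.SeparableSpace X ∧ CompleteSpace X ∧
    ∀ (N : Type) [MetricSpace N] [TopologicalSpace.SeparableSpace N],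
      distSet N ⊆ distSet X →
        ∃ f : N → X, ∀ a b : N, dist (f a) (f b) = dist a b

/-- The triple `(a, b, c)` of nonnegative reals is metric: `|a - b| ≤ c ≤ a + b`. -/
def MetricTriple (a b c : ℝ) : Prop := |a - b| ≤ c ∧ c ≤ a + b

/-- `x ⤳ (a, b, c, d)`: the triples `(x,a,b)` and `(x,c,d)` are metric and
`a ≥ max {b, c, d}`. -/
def Leads (x a b c d : ℝ) : Prop :=
  MetricTriple x a b ∧ MetricTriple x c d ∧ b ≤ a ∧ c ≤ a ∧ d ≤ a

/-- The 4-values condition. -/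
def FourValues (R : Set ℝ) : Prop :=
  ∀ a b c d, a ∈ R → b ∈ R → c ∈ R → d ∈ R →
    (∃ x ∈ R, Leads x a b c d) → ∃ y ∈ R, Leads y a d c b

/-- `0` is a limit point of `R ⊆ [0, ∞)`. -/
def ZeroLimit (R : Set ℝ) : Prop := ∀ ε > 0, ∃ r ∈ R, 0 < r ∧ r < ε

/-- `d` is a metric on the type `α`. -/
def IsMetricOn {α : Type*} (d : α → α → ℝ) : Prop :=
  (∀ x, d x x = 0) ∧ (∀ x y, d x y = d y x) ∧
    (∀ x y z, d x z ≤ d x y + d y z) ∧ ∀ x y, d x y = 0 → x = y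

/-- A restricted type function of the metric space `X`: a positive real valued function on a
finite subset of `X`, compatible with the metric, with values in the distance set of `X`. -/
def IsRestrictedType (X : Type*) [MetricSpace X] (F : Set X) (t : F → ℝ) : Prop :=
  F.Finite ∧ (∀ x, 0 < t x) ∧
    (∀ x y : F, |t x - t y| ≤ dist (x : X) (y : X) ∧ dist (x : X) (y : X) ≤ t x + t y) ∧
    ∀ x, t x ∈ distSet X

/-- A Katětov function of the metric space `X`: a positive real valued function on a finite
subset of `X` whose one-point extension `Sp(k)` is isometric to a subspace of `X`. -/
def IsKatetov (X : Type*) [MetricSpace X] (F : Set X) (k : F → ℝ) : Prop :=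
  F.Finite ∧ (∀ x, 0 < k x) ∧
    ∃ (g : F → X) (p : X),
      (∀ x y : F, dist (g x) (g y) = dist (x : X) (y : X)) ∧ ∀ x : F, dist p (g x) = k x

/-- `p` realizes the type function `t` in `X`. -/
def Realizes {X : Type*} [MetricSpace X] (F : Set X) (t : F → ℝ) (p : X) : Prop :=
  ∀ x : F, dist p (x : X) = t x

inductive Tri : Type | A | B | C
deriving DecidableEq

instance : Fintype Tri :=
  ⟨{Tri.A, Tri.B, Tri.C}, fun x => by cases x <;> simp⟩

open Tri in
def triDist (a b c : ℝ) : Tri → Tri → ℝ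
  | A, A => 0 | B, B => 0 | C, C => 0
  | A, B => a | B, A => a
  | A, C => b | C, A => b
  | B, C => c | C, B => c

noncomputable def triMetric (a b c : ℝ) (ha : 0 < a) (hb : 0 < b) (hc : 0 < c)
    (h1 : a ≤ b + c) (h2 : b ≤ a + c) (h3 : c ≤ a + b) : MetricSpace Tri where
  dist := triDist a b c
  dist_self x := by cases x <;> rfl
  dist_comm x y := by cases x <;> cases y <;> rfl
  dist_triangle x y z := by
    cases x <;> cases y <;> cases z <;> simp [triDist] <;> linarith
  eq_of_dist_eq_zero := by
    intro x y h
    cases x <;> cases y <;> simp_all [triDist] <;> linarith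

/-- The key realization lemma: given a metric triangle with sides in the distance set,
and a pair at distance `a`, we can realize the third vertex. -/
theorem realize3 {U : Type} [MetricSpace U] (hU : IsUrysohn U)
    (a b c : ℝ) (hma : a ∈ distSet U) (hmb : b ∈ distSet U) (hmc : c ∈ distSet U)
    (ha : 0 < a) (hb : 0 < b) (hc : 0 < c)
    (h1 : a ≤ b + c) (h2 : b ≤ a + c) (h3 : c ≤ a + b)
    (u v : U) (huv : dist u v = a) :
    ∃ w : U, dist u w = b ∧ dist v w = c := by
  classical
  letI : MetricSpace Tri := triMetric a b c ha hb hc h1 h2 h3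
  have hsub : distSet Tri ⊆ distSet U := by
    rintro r ⟨x, y, hxy⟩
    cases x <;> cases y <;> rw [← hxy] <;>
      first
        | exact ⟨u, u, dist_self u⟩
        | exact hma
        | exact hmb
        | exact hmc
  obtain ⟨f, hf⟩ := hU.2.2.2 Tri hsub
  have hab : dist (f Tri.A) (f Tri.B) = a := hf Tri.A Tri.B
  have hac : dist (f Tri.A) (f Tri.C) = b := hf Tri.A Tri.C
  have hbc : dist (f Tri.B) (f Tri.C) = c := hf Tri.B Tri.C
  set p0 := f Tri.A
  set p1 := f Tri.B
  set p2 := f Tri.C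
  have hne : p1 ≠ p0 := by
    intro h
    rw [h, dist_self] at hab
    linarith
  set F : Set U := {p0, p1} with hF
  have hFfin : F.Finite := (Set.finite_singleton p1).insert p0
  set φ : F → U := fun x => if (x : U) = p0 then u else v with hφ
  have hmem : ∀ x : F, (x : U) = p0 ∨ (x : U) = p1 := by
    rintro ⟨x, hx⟩
    simpa [hF] using hx
  have hiso : ∀ x y : F, dist (φ x) (φ y) = dist (x : U) (y : U) := by
    intro x y
    rcases hmem x with hx | hx <;> rcases hmem y with hy | hy <;>
      simp only [hφ, hx, hy, if_pos, if_neg hne] <;>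
      first
        | simp
        | rw [huv, hab]
        | rw [dist_comm v u, dist_comm p1 p0, huv, hab]
  obtain ⟨g, hg⟩ := hU.1 F hFfin φ hiso
  have hg0 : g p0 = u := by
    have := hg ⟨p0, by simp [hF]⟩
    simpa [hφ] using this
  have hg1 : g p1 = v := by
    have := hg ⟨p1, by simp [hF]⟩
    simpa [hφ, hne] using this
  refine ⟨g p2, ?_, ?_⟩
  · rw [← hg0, g.dist_eq, hac]
  · rw [← hg1, g.dist_eq, hbc]

/-- If `U` is an Urysohn metric space and `0` is a limit point of its distance
set, then its distance set is a closed subset of `ℝ`. -/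
theorem statement19 (U : Type) [MetricSpace U] (hU : IsUrysohn U)
    (hlim : ZeroLimit (distSet U)) :
    IsClosed (distSet U) := by
  apply isClosed_of_closure_subset
  intro r hr
  obtain ⟨e, hemem, -, -⟩ := hlim 1 one_pos
  obtain ⟨u0, v0', -⟩ := hemem
  have h0mem : (0 : ℝ) ∈ distSet U := ⟨u0, u0, dist_self u0⟩
  have hsubIci : distSet U ⊆ Set.Ici 0 := by
    rintro x ⟨a, b, h⟩; rw [← h]; exact dist_nonneg
  have hrnn : 0 ≤ r :=
    (isClosed_Ici.closure_subset_iff.mpr hsubIci) hr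
  rcases eq_or_lt_of_le hrnn with hr0 | hrpos
  · exact hr0 ▸ h0mem
  -- choose small distances s n
  have hs : ∀ n : ℕ, ∃ sn ∈ distSet U, 0 < sn ∧ sn < min ((1/2 : ℝ) ^ n) r := by
    intro n
    exact hlim _ (lt_min (by positivity) hrpos)
  choose s hsmem hspos hslt using hs
  have hs_half : ∀ n, s n < (1/2 : ℝ) ^ n := fun n => (lt_min_iff.mp (hslt n)).1
  have hs_r : ∀ n, s n < r := fun n => (lt_min_iff.mp (hslt n)).2
  -- choose ρ n in distSet close to r
  have hρex : ∀ n : ℕ, ∃ ρn ∈ distSet U, dist r ρn < min (s (n - 1)) (s n) / 2 := by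
    intro n
    exact Metric.mem_closure_iff.mp hr _ (by
      have := hspos (n - 1); have := hspos n
      have : 0 < min (s (n - 1)) (s n) := lt_min ‹_› ‹_›
      linarith)
  choose ρ hρmem hρcl using hρex
  have hρn : ∀ n, |r - ρ n| < s n / 2 := by
    intro n
    have h := hρcl n
    rw [Real.dist_eq] at h
    have : min (s (n - 1)) (s n) ≤ s n := min_le_right _ _
    linarith
  have hρn' : ∀ n, |r - ρ (n + 1)| < s n / 2 := by
    intro n
    have h := hρcl (n + 1)
    rw [Real.dist_eq] at h
    have hmin : min (s (n + 1 - 1)) (s (n + 1)) ≤ s n := by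
      simp only [Nat.add_sub_cancel]
      exact min_le_left _ _
    linarith
  have hρpos : ∀ n, r / 2 < ρ n := by
    intro n
    have h := hρn n
    have h2 := hs_r n
    have := abs_lt.mp h
    linarith
  -- consecutive ρ's form a metric triangle with s n
  have hcons : ∀ n, |ρ n - ρ (n + 1)| < s n := by
    intro n
    have h1 := abs_lt.mp (hρn n)
    have h2 := abs_lt.mp (hρn' n)
    rw [abs_lt]
    constructor <;> linarith
  -- the recursive step
  have key : ∀ (n : ℕ) (y : U), ∀ u : U, dist u y = ρ n →
      ∃ y' : U, dist u y' = ρ (n + 1) ∧ dist y y' = s n := by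
    intro n y u huy
    apply realize3 hU (ρ n) (ρ (n + 1)) (s n) (hρmem n) (hρmem (n + 1)) (hsmem n)
      (lt_trans (by linarith [hrpos]) (hρpos n))
      (lt_trans (by linarith [hrpos]) (hρpos (n + 1))) (hspos n) ?_ ?_ ?_ u y huy
    · have := abs_lt.mp (hcons n); linarith
    · have := abs_lt.mp (hcons n); linarith
    · have := hρpos n; have := hρpos (n + 1); have := hs_r n; linarith
  obtain ⟨u, v0, huv⟩ := hρmem 0
  let g : ∀ n : ℕ, {y : U // dist u y = ρ n} := fun n =>
    Nat.rec ⟨v0, huv⟩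
      (fun n p => ⟨Classical.choose (key n p.1 u p.2),
        (Classical.choose_spec (key n p.1 u p.2)).1⟩) n
  have hgs : ∀ n, dist (g n).1 (g (n + 1)).1 = s n := fun n =>
    (Classical.choose_spec (key n (g n).1 u (g n).2)).2
  set f : ℕ → U := fun n => (g n).1 with hfdef
  have hcauchy : CauchySeq f := by
    apply cauchySeq_of_le_geometric (1/2 : ℝ) 1 (by norm_num)
    intro n
    rw [hfdef]
    simp only []
    rw [hgs n, one_mul]
    exact le_of_lt (hs_half n)
  haveI : CompleteSpace U := hU.2.2.1
  obtain ⟨p, hp⟩ := cauchySeq_tendsto_of_complete hcauchy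
  have htend1 : Filter.Tendsto (fun n => dist u (f n)) Filter.atTop (nhds (dist u p)) :=
    Filter.Tendsto.dist tendsto_const_nhds hp
  have htend2 : Filter.Tendsto ρ Filter.atTop (nhds r) := by
    rw [tendsto_iff_dist_tendsto_zero]
    apply squeeze_zero (fun n => dist_nonneg) (g := fun n => (1/2 : ℝ) ^ n)
    · intro n
      rw [Real.dist_eq]
      have h := hρn n
      have h2 := hs_half n
      have h3 := pow_nonneg (by norm_num : (0:ℝ) ≤ 1/2) n
      rw [abs_sub_comm]
      linarith
    · exact tendsto_pow_atTop_nhds_zero_of_lt_one (by norm_num) (by norm_num)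
  have heq : (fun n => dist u (f n)) = ρ := funext fun n => (g n).2
  rw [heq] at htend1
  exact ⟨u, p, tendsto_nhds_unique htend1 htend2⟩
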